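/- Let I = (g₀, …, g_t) be a homogeneous ideal in a graded polynomial ring S over a field, graded by an abelian group A, and let α ∈ A. Suppose for each i the set M_i of monomials of degree α − deg gᵢ generates an ideal whose saturation with respect to an ideal B equals (1) [i.e., the monomials of that degree have no common zero outside V(B)]. Then the ideal generated by I(α) := I ∩ S_α satisfies (⟨I(α)⟩ : B^∞) = (I : B^∞). -/

import Mathlib

open MvPolynomial in
/-- Let `I = (g₀,…,g_t)` be a homogeneous ideal of a polynomial ring over a field, graded
by an abelian group `A` via weights `w`, and let `α ∈ A`.  If for each `i` the monomials of
degree `α − deg gᵢ` generate an ideal whose `B`-saturation is the unit ideal (base-point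
freeness of `|α − deg gᵢ|`), then the ideal generated by `I(α) = I ∩ S_α` has the same
`B`-saturation as `I`. -/
theorem stmt15 {σ K A : Type*} [Field K] [AddCommGroup A] (w : σ → A)
    (t : ℕ) (g : Fin (t + 1) → MvPolynomial σ K) (dg : Fin (t + 1) → A)
    (hg : ∀ i, g i ∈ weightedHomogeneousSubmodule K w (dg i)) (hg0 : ∀ i, g i ≠ 0)
    (I B : Ideal (MvPolynomial σ K)) (hI : I = Ideal.span (Set.range g)) (α : A)
    (hbpf : ∀ i, (⨆ n : ℕ, Submodule.colon
        (Ideal.span {p : MvPolynomial σ K | ∃ d : σ →₀ ℕ,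
          p = monomial d 1 ∧ Finsupp.weight w d = α - dg i}) ((B ^ n : Ideal (MvPolynomial σ K)) : Set (MvPolynomial σ K))) = ⊤) :
    (⨆ n : ℕ, Submodule.colon
        (Ideal.span ((I : Set (MvPolynomial σ K)) ∩
          (weightedHomogeneousSubmodule K w α : Set (MvPolynomial σ K)))) ((B ^ n : Ideal (MvPolynomial σ K)) : Set (MvPolynomial σ K)))
      = ⨆ n : ℕ, Submodule.colon I ((B ^ n : Ideal (MvPolynomial σ K)) : Set (MvPolynomial σ K)) := by
  subst hI
  set I : Ideal (MvPolynomial σ K) := Ideal.span (Set.range g) with hI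
  set J : Ideal (MvPolynomial σ K) :=
    Ideal.span ((I : Set (MvPolynomial σ K)) ∩
      (weightedHomogeneousSubmodule K w α : Set (MvPolynomial σ K))) with hJ
  have key : ∀ i, ∃ n : ℕ, ∀ b ∈ (B ^ n : Ideal (MvPolynomial σ K)), g i * b ∈ J := by
    intro i
    set Mi : Ideal (MvPolynomial σ K) :=
      Ideal.span {p : MvPolynomial σ K | ∃ d : σ →₀ ℕ,
        p = monomial d 1 ∧ Finsupp.weight w d = α - dg i} with hMi
    have h1 : (1 : MvPolynomial σ K) ∈ ⨆ n : ℕ, Submodule.colon Mi ((B ^ n : Ideal (MvPolynomial σ K)) : Set (MvPolynomial σ K)) := by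
      rw [hMi, hbpf i]; trivial
    have hdir : Directed (· ≤ ·) fun n : ℕ => Submodule.colon Mi ((B ^ n : Ideal (MvPolynomial σ K)) : Set (MvPolynomial σ K)) := by
      refine Monotone.directed_le fun n m hnm => ?_
      exact Submodule.colon_mono le_rfl (Ideal.pow_le_pow_right hnm)
    obtain ⟨n, hn⟩ := (Submodule.mem_iSup_of_directed _ hdir).mp h1
    refine ⟨n, fun b hb => ?_⟩
    have hbMi : b ∈ Mi := by simpa using Submodule.mem_colon.mp hn b hb
    have hgen : ∀ (d : σ →₀ ℕ), Finsupp.weight w d = α - dg i →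
        g i * monomial d 1 ∈ J := by
      intro d hd
      refine Ideal.subset_span ⟨?_, ?_⟩
      · exact Ideal.mul_mem_right _ _ (Ideal.subset_span ⟨i, rfl⟩)
      · have : IsWeightedHomogeneous w (g i * monomial d 1) (dg i + (α - dg i)) :=
          ((mem_weightedHomogeneousSubmodule K w (dg i) (g i)).mp (hg i)).mul
            (isWeightedHomogeneous_monomial w d 1 hd)
        have he : dg i + (α - dg i) = α := by abel
        exact (mem_weightedHomogeneousSubmodule K w α _).mpr (he ▸ this)
    clear hn h1 hb
    induction hbMi using Submodule.span_induction with
    | mem x hx => obtain ⟨d, rfl, hd⟩ := hx; exact hgen d hd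
    | zero => simpa using J.zero_mem
    | add x y hx hy ihx ihy => rw [mul_add]; exact J.add_mem ihx ihy
    | smul a x hx ihx =>
        rw [smul_eq_mul, mul_left_comm]
        exact J.mul_mem_left a ihx
  choose m hm using key
  set M : ℕ := Finset.univ.sup m with hM
  have hIB : ∀ y ∈ I, ∀ q ∈ (B ^ M : Ideal (MvPolynomial σ K)), y * q ∈ J := by
    intro y hy
    induction hy using Submodule.span_induction with
    | mem x hx =>
        obtain ⟨i, rfl⟩ := hx
        intro q hq
        exact hm i q (Ideal.pow_le_pow_right (Finset.le_sup (Finset.mem_univ i)) hq)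
    | zero => intro q hq; simpa using J.zero_mem
    | add x y hx hy ihx ihy =>
        intro q hq; rw [add_mul]; exact J.add_mem (ihx q hq) (ihy q hq)
    | smul a x hx ihx =>
        intro q hq
        rw [smul_eq_mul, mul_assoc]
        exact J.mul_mem_left a (ihx q hq)
  refine le_antisymm ?_ ?_
  · refine iSup_le fun n => le_iSup_of_le n ?_
    exact Submodule.colon_mono (Ideal.span_le.mpr Set.inter_subset_left) le_rfl
  · refine iSup_le fun n => ?_
    intro x hx
    have hxJ : x ∈ Submodule.colon J ((B ^ (n + M) : Ideal (MvPolynomial σ K)) : Set (MvPolynomial σ K)) := by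
      rw [Submodule.mem_colon]
      intro p hp
      rw [pow_add] at hp
      refine Submodule.mul_induction_on hp (fun a ha b hb => ?_)
        (fun u v hu hv => ?_)
      · rw [smul_eq_mul, ← mul_assoc]
        exact hIB _ (Submodule.mem_colon.mp hx a ha) b hb
      · rw [smul_add]; exact J.add_mem hu hv
    exact Submodule.mem_iSup_of_mem (n + M) hxJ
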